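/- Let L be a slowly varying function at infinity and β > 0. Define g₁, g̃₁: for integers n ≥ 2, g₁(y) = n - 1 if n-1 + (1/(2β))log L(e^{2n-2}) ≤ y < n-1 + (1/(2β))log L(e^{2n}), and g₁(y) = y - (1/(2β))log L(e^{2n}) if n-1 + (1/(2β))log L(e^{2n}) ≤ y < n + (1/(2β))log L(e^{2n}); and g̃₁(y) = y - (1/(2β))log L(e^{2n-2}) if n-1 + (1/(2β))log L(e^{2n-2}) ≤ y < n + (1/(2β))log L(e^{2n}). Then g̃₁(y) - g₁(y) → 0 as y → ∞. -/

import Mathlib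

open Filter

/-- For `L` slowly varying and `β > 0`, the piecewise functions `g₁` and `g̃₁` from the
domain-of-attraction proof satisfy `g̃₁(y) - g₁(y) → 0` as `y → ∞`. -/
theorem stmt7 (L : ℝ → ℝ) (hLpos : ∀ x, 0 < L x)
    (hL : ∀ a : ℝ, 0 < a → Tendsto (fun x => L (a * x) / L x) atTop (nhds 1))
    (β : ℝ) (hβ : 0 < β) (g1 gt1 : ℝ → ℝ)
    (hg1a : ∀ n : ℕ, 2 ≤ n → ∀ y : ℝ,
      (n : ℝ) - 1 + 1 / (2 * β) * Real.log (L (Real.exp (2 * (n : ℝ) - 2))) ≤ y →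
      y < (n : ℝ) - 1 + 1 / (2 * β) * Real.log (L (Real.exp (2 * (n : ℝ)))) →
      g1 y = (n : ℝ) - 1)
    (hg1b : ∀ n : ℕ, 2 ≤ n → ∀ y : ℝ,
      (n : ℝ) - 1 + 1 / (2 * β) * Real.log (L (Real.exp (2 * (n : ℝ)))) ≤ y →
      y < (n : ℝ) + 1 / (2 * β) * Real.log (L (Real.exp (2 * (n : ℝ)))) →
      g1 y = y - 1 / (2 * β) * Real.log (L (Real.exp (2 * (n : ℝ)))))
    (hgt1 : ∀ n : ℕ, 2 ≤ n → ∀ y : ℝ,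
      (n : ℝ) - 1 + 1 / (2 * β) * Real.log (L (Real.exp (2 * (n : ℝ) - 2))) ≤ y →
      y < (n : ℝ) + 1 / (2 * β) * Real.log (L (Real.exp (2 * (n : ℝ)))) →
      gt1 y = y - 1 / (2 * β) * Real.log (L (Real.exp (2 * (n : ℝ) - 2)))) :
    Tendsto (fun y => gt1 y - g1 y) atTop (nhds 0) := by
  set c : ℕ → ℝ := fun n => 1 / (2 * β) * Real.log (L (Real.exp (2 * (n : ℝ)))) with hc
  -- rewriting the hypotheses in terms of `c`
  have hcast : ∀ n : ℕ, 2 ≤ n → ((n - 1 : ℕ) : ℝ) = (n : ℝ) - 1 := by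
    intro n hn
    have h1 : (1 : ℕ) ≤ n := by omega
    push_cast [Nat.cast_sub h1]
    ring
  have hexp : ∀ n : ℕ, 2 ≤ n →
      c (n - 1) = 1 / (2 * β) * Real.log (L (Real.exp (2 * (n : ℝ) - 2))) := by
    intro n hn
    simp only [hc]
    rw [hcast n hn]
    ring_nf
  -- the consecutive differences of `c` tend to 0
  have hd : Tendsto (fun k : ℕ => c (k + 1) - c k) atTop (nhds 0) := by
    have h1 : Tendsto (fun x => L (Real.exp 2 * x) / L x) atTop (nhds 1) :=
      hL _ (Real.exp_pos 2)
    have h2 : Tendsto (fun k : ℕ => Real.exp (2 * (k : ℝ))) atTop atTop := by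
      apply Real.tendsto_exp_atTop.comp
      exact Tendsto.const_mul_atTop two_pos tendsto_natCast_atTop_atTop
    have h3 : Tendsto (fun k : ℕ =>
        L (Real.exp 2 * Real.exp (2 * (k : ℝ))) / L (Real.exp (2 * (k : ℝ)))) atTop (nhds 1) :=
      h1.comp h2
    have h4 : Tendsto (fun k : ℕ =>
        Real.log (L (Real.exp 2 * Real.exp (2 * (k : ℝ))) / L (Real.exp (2 * (k : ℝ)))))
        atTop (nhds 0) := by
      have := (Real.continuousAt_log one_ne_zero).tendsto.comp h3
      rw [Real.log_one] at this
      exact this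
    have h5 := h4.const_mul (1 / (2 * β))
    rw [mul_zero] at h5
    apply h5.congr
    intro k
    simp only [hc]
    rw [← Real.exp_add]
    rw [Real.log_div (hLpos _).ne' (hLpos _).ne']
    push_cast
    ring_nf
  -- the sequence `n + c n` tends to infinity
  obtain ⟨K, hK⟩ : ∃ K, ∀ k ≥ K, |c (k + 1) - c k| < 1 / 2 := by
    obtain ⟨K, hK⟩ := Metric.tendsto_atTop.mp hd (1 / 2) (by norm_num)
    exact ⟨K, fun k hk => by simpa [Real.dist_eq] using hK k hk⟩
  have hlb : ∀ m : ℕ, c (K + m) ≥ c K - (m : ℝ) / 2 := by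
    intro m
    induction m with
    | zero => simp
    | succ m ih =>
      have h := hK (K + m) (Nat.le_add_right _ _)
      have h' : c (K + m + 1) - c (K + m) > -(1 / 2) := by
        have := abs_lt.mp h
        linarith [this.1]
      have : K + (m + 1) = K + m + 1 := by omega
      rw [this]
      push_cast
      linarith
  have ha : Tendsto (fun m : ℕ => (m : ℝ) + c m) atTop atTop := by
    apply tendsto_atTop_mono' atTop
      (show ∀ᶠ m : ℕ in atTop, (m : ℝ) / 2 + ((K : ℝ) / 2 + c K) ≤ (m : ℝ) + c m from ?_)
    · apply tendsto_atTop_add_const_right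
      exact Tendsto.atTop_div_const two_pos tendsto_natCast_atTop_atTop
    · filter_upwards [eventually_ge_atTop K] with m hm
      have h1 := hlb (m - K)
      have h2 : K + (m - K) = m := by omega
      rw [h2] at h1
      have h3 : ((m - K : ℕ) : ℝ) = (m : ℝ) - (K : ℝ) := by
        push_cast [Nat.cast_sub hm]; ring
      rw [h3] at h1
      linarith
  -- main argument
  rw [Metric.tendsto_atTop]
  intro ε hε
  obtain ⟨N₀, hN₀⟩ := Metric.tendsto_atTop.mp hd ε hε
  set N' := max N₀ 1 with hN'
  refine ⟨1 + ∑ k ∈ Finset.range (N' + 1), |(k : ℝ) + c k|, fun y hy => ?_⟩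
  have hcov : ∀ k ≤ N', (k : ℝ) + c k ≤ y := by
    intro k hk
    have h1 : |(k : ℝ) + c k| ≤ ∑ j ∈ Finset.range (N' + 1), |(j : ℝ) + c j| :=
      Finset.single_le_sum (f := fun j : ℕ => |(j : ℝ) + c j|)
        (fun i _ => abs_nonneg _) (Finset.mem_range.mpr (by omega))
    have h2 := le_abs_self ((k : ℝ) + c k)
    linarith
  have hS : ∃ m : ℕ, y < (m : ℝ) + c m := (ha.eventually_gt_atTop y).exists
  set n := Nat.find hS with hn
  have hn1 : y < (n : ℝ) + c n := Nat.find_spec hS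
  have hmin : ∀ k < n, (k : ℝ) + c k ≤ y := fun k hk => not_lt.mp (Nat.find_min hS hk)
  have hnN : N' < n := by
    by_contra h
    exact absurd (hcov n (not_lt.mp h)) (not_le.mpr hn1)
  have hn2 : 2 ≤ n := by omega
  have hprev : ((n - 1 : ℕ) : ℝ) + c (n - 1) ≤ y := hmin (n - 1) (by omega)
  rw [hcast n hn2] at hprev
  have hdn : |c n - c (n - 1)| < ε := by
    have h := hN₀ (n - 1) (by omega)
    have h2 : n - 1 + 1 = n := by omega
    rw [h2] at h
    simpa [Real.dist_eq] using h
  have habs := abs_lt.mp hdn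
  rw [Real.dist_eq, sub_zero]
  by_cases hy2 : y < (n : ℝ) - 1 + c n
  · -- flat piece of g1
    have hg1 : g1 y = (n : ℝ) - 1 := by
      apply hg1a n hn2 y
      · rw [← hexp n hn2]; linarith
      · exact hy2
    have hgt : gt1 y = y - c (n - 1) := by
      rw [hexp n hn2]
      apply hgt1 n hn2 y
      · rw [← hexp n hn2]; linarith
      · exact hn1
    rw [hg1, hgt, abs_lt]
    constructor <;> linarith
  · -- sloped piece of g1
    push_neg at hy2
    have hg1 : g1 y = y - c n := hg1b n hn2 y hy2 hn1
    have hgt : gt1 y = y - c (n - 1) := by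
      rw [hexp n hn2]
      apply hgt1 n hn2 y
      · rw [← hexp n hn2]; linarith
      · exact hn1
    rw [hg1, hgt]
    have : y - c (n - 1) - (y - c n) = c n - c (n - 1) := by ring
    rw [this]
    exact hdn
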